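/- The map ℤ^E/(Λ_A + Λ*_A) → ℤ^r/(AAᵀℤ^r) given on coset representatives by γ ↦ Aγ is well-defined and is an isomorphism of abelian groups; in other words, the Jacobian group Jac(M) is isomorphic to the cokernel of the integer matrix AAᵀ. -/

import Mathlib

open Matrix

lemma tu_surj {r m : ℕ} (A : Matrix (Fin r) (Fin m) ℤ)
    (hTU : A.IsTotallyUnimodular) (hrank : (A.map ((↑) : ℤ → ℝ)).rank = r) :
    Function.Surjective A.mulVecLin := by
  classical
  set A' := A.map ((↑) : ℤ → ℝ) with hA'
  have hspan : Submodule.span ℝ (Set.range A'ᵀ) = ⊤ := by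
    apply Submodule.eq_top_of_finrank_eq
    rw [show Set.range A'ᵀ = Set.range A'.col from rfl, ← rank_eq_finrank_span_cols, hrank, Module.finrank_fintype_fun_eq_card,
      Fintype.card_fin]
  obtain ⟨t, hts, hsp, hli⟩ := exists_linearIndependent ℝ (Set.range A'ᵀ)
  rw [hspan] at hsp
  let b : Module.Basis t ℝ (Fin r → ℝ) := Module.Basis.mk hli (by rw [Subtype.range_val]; exact hsp.ge)
  have : Fintype t := FiniteDimensional.fintypeBasisIndex b
  have hcard : Fintype.card t = r := by
    have := Module.finrank_eq_card_basis b
    rw [Module.finrank_fintype_fun_eq_card, Fintype.card_fin] at this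
    omega
  let e : Fin r ≃ t := (Fintype.equivFinOfCardEq hcard).symm
  have hpre : ∀ i : Fin r, ∃ j : Fin m, A'ᵀ j = (e i : Fin r → ℝ) := fun i => hts (e i).2
  choose g hg using hpre
  have hlig : LinearIndependent ℝ (fun i : Fin r => A'ᵀ (g i)) := by
    have h2 : (fun i : Fin r => A'ᵀ (g i)) = (fun x : t => (x : Fin r → ℝ)) ∘ e := by
      funext i; exact hg i
    rw [h2]
    exact hli.comp e e.injective
  set B := A.submatrix id g with hB
  have hBmap : B.map ((↑) : ℤ → ℝ) = A'.submatrix id g := rfl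
  have hdetR : IsUnit (A'.submatrix id g) := by
    rw [← linearIndependent_cols_iff_isUnit]
    exact hlig
  have hdet0 : (A'.submatrix id g).det ≠ 0 :=
    ((Matrix.isUnit_iff_isUnit_det _).mp hdetR).ne_zero
  have hdetcast : ((B.det : ℤ) : ℝ) = (A'.submatrix id g).det := by
    rw [← hBmap]
    exact RingHom.map_det (Int.castRingHom ℝ) B
  have hdetne : B.det ≠ 0 := by
    intro h; rw [h] at hdetcast; simp at hdetcast; exact hdet0 hdetcast.symm
  have hginj : Function.Injective g := by
    intro i j hij
    have : (e i : Fin r → ℝ) = (e j : Fin r → ℝ) := by rw [← hg i, ← hg j, hij]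
    exact e.injective (Subtype.ext this)
  have hunit : IsUnit B.det := by
    rw [Int.isUnit_iff]
    obtain ⟨s, hs⟩ := hTU r id g Function.injective_id hginj
    rw [← hB] at hs
    rcases s with _ | _ | _ <;> simp at hs <;> omega
  have hinv := Matrix.mul_nonsing_inv B hunit
  have key : ∀ (x : Fin r → ℤ),
      A.mulVec (fun j => ∑ i : Fin r, if g i = j then x i else 0) = B.mulVec x := by
    intro x; ext k
    simp only [mulVec, dotProduct, Finset.mul_sum, mul_ite, mul_zero]
    rw [Finset.sum_comm]
    refine Finset.sum_congr rfl fun i _ => ?_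
    rw [Finset.sum_ite_eq Finset.univ (g i) (fun j => A k j * x i)]
    simp [hB]
  intro y
  refine ⟨fun j => ∑ i : Fin r, if g i = j then B⁻¹.mulVec y i else 0, ?_⟩
  rw [mulVecLin_apply, key, mulVec_mulVec, hinv, one_mulVec]

/-- The Jacobian group `ℤ^E/(Λ_A + Λ*_A)` is isomorphic to the cokernel `ℤ^r/(AAᵀℤ^r)` of
`AAᵀ`, via the map induced by `γ ↦ Aγ`. -/
theorem stmt12 {r m : ℕ} (A : Matrix (Fin r) (Fin m) ℤ)
    (hTU : A.IsTotallyUnimodular) (hrank : (A.map ((↑) : ℤ → ℝ)).rank = r) :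
    ∃ f : ((Fin m → ℤ) ⧸ (LinearMap.ker (Matrix.mulVecLin A) ⊔
            LinearMap.range (Matrix.mulVecLin Aᵀ))) ≃ₗ[ℤ]
          ((Fin r → ℤ) ⧸ LinearMap.range (Matrix.mulVecLin (A * Aᵀ))),
      ∀ γ : Fin m → ℤ,
        f (Submodule.Quotient.mk γ) = Submodule.Quotient.mk (A.mulVec γ) := by
  set N := LinearMap.ker (Matrix.mulVecLin A) ⊔ LinearMap.range (Matrix.mulVecLin Aᵀ) with hN
  set R := LinearMap.range (Matrix.mulVecLin (A * Aᵀ)) with hR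
  set φ : (Fin m → ℤ) →ₗ[ℤ] ((Fin r → ℤ) ⧸ R) := R.mkQ.comp (Matrix.mulVecLin A) with hφ
  have hker : LinearMap.ker φ = N := by
    ext x
    simp only [hφ, LinearMap.mem_ker, LinearMap.comp_apply, Submodule.mkQ_apply,
      Submodule.Quotient.mk_eq_zero, mulVecLin_apply]
    constructor
    · rintro hx
      obtain ⟨z, hz⟩ := hx
      rw [mulVecLin_apply] at hz
      rw [hN]
      have h1 : x - Aᵀ.mulVec z ∈ LinearMap.ker (Matrix.mulVecLin A) := by
        rw [LinearMap.mem_ker, map_sub, mulVecLin_apply, mulVecLin_apply,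
          mulVec_mulVec, hz, sub_self]
      have h2 : Aᵀ.mulVec z ∈ LinearMap.range (Matrix.mulVecLin Aᵀ) :=
        ⟨z, rfl⟩
      have : x = (x - Aᵀ.mulVec z) + Aᵀ.mulVec z := by ring
      rw [this]
      exact Submodule.add_mem_sup h1 h2
    · intro hx
      rw [hN, Submodule.mem_sup] at hx
      obtain ⟨u, hu, v, ⟨z, hz⟩, huv⟩ := hx
      rw [LinearMap.mem_ker, mulVecLin_apply] at hu
      refine ⟨z, ?_⟩
      rw [mulVecLin_apply, ← mulVec_mulVec, ← huv, mulVec_add, hu, zero_add]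
      rw [← hz, mulVecLin_apply]
  have hle : N ≤ LinearMap.ker φ := hker.ge
  set f0 := Submodule.liftQ N φ hle with hf0
  have hinj : Function.Injective f0 := by
    rw [← LinearMap.ker_eq_bot, hf0, Submodule.ker_liftQ_eq_bot N φ hle hker.le]
  have hsurj : Function.Surjective f0 := by
    have h1 : Function.Surjective φ :=
      (Submodule.mkQ_surjective R).comp (tu_surj A hTU hrank)
    intro y
    obtain ⟨x, hx⟩ := h1 y
    exact ⟨Submodule.Quotient.mk x, hx⟩
  exact ⟨LinearEquiv.ofBijective f0 ⟨hinj, hsurj⟩, fun γ => rfl⟩
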